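/- There exists a constant C₃ > 0, depending only on the dimension 3, with the following property: whenever V : ℝ³ → ℝ is measurable and C ≥ 0 is such that for every H¹ function f : ℝ³ → ℂ one has ∫ |V(x) f(x)|² dx ≤ C² (∫ |f(x)|² dx + ∫ ‖∇f(x)‖² dx), then for every x₀ ∈ ℝ³ and every R ≥ 1, ∫_{B(x₀, R)} |V(x)|² dx ≤ C₃ C² R³, where B(x₀, R) is the closed ball of radius R centered at x₀. (In particular the form bound V² ≤ C²(1 − Δ) forces V to be locally square-integrable.) -/

import Mathlib

set_option maxHeartbeats 1000000
set_option synthInstance.maxHeartbeats 400000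


open MeasureTheory
open scoped ENNReal

open MeasureTheory Real
open scoped ENNReal

local notation "E3" => EuclideanSpace ℝ (Fin 3)

lemma gauss_integrable {b : ℝ} (hb : 0 < b) (x₀ : E3) :
    Integrable (fun x : E3 ↦ rexp (-b * ‖x - x₀‖ ^ 2)) := by
  have h0 : Integrable (fun v : E3 ↦ rexp (-b * ‖v‖ ^ 2)) := by
    have := (GaussianFourier.integrable_cexp_neg_mul_sq_norm_add (V := E3) (b := (b : ℂ))
      (by simpa using hb) 0 0).norm
    refine this.congr ?_
    filter_upwards with v
    rw [Complex.norm_exp]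
    norm_num
    left
    norm_cast
  exact h0.comp_sub_right x₀

lemma gauss_hasFDerivAt (a : ℝ) (x₀ x : E3) :
    HasFDerivAt (fun y : E3 ↦ ((rexp (-a * ‖y - x₀‖ ^ 2) : ℝ) : ℂ))
      (Complex.ofRealCLM.comp
        ((rexp (-a * ‖x - x₀‖ ^ 2)) • ((-a) • (2 • innerSL ℝ (x - x₀))))) x := by
  have h1 : HasFDerivAt (fun y : E3 ↦ ‖y - x₀‖ ^ 2) (2 • innerSL ℝ (x - x₀)) x := by
    have := ((hasFDerivAt_id x).sub_const x₀).norm_sq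
    simpa using this
  have h2 : HasFDerivAt (fun y : E3 ↦ -a * ‖y - x₀‖ ^ 2)
      ((-a) • (2 • innerSL ℝ (x - x₀))) x := h1.const_mul (-a)
  have h3 : HasFDerivAt (fun y : E3 ↦ rexp (-a * ‖y - x₀‖ ^ 2))
      ((rexp (-a * ‖x - x₀‖ ^ 2)) • ((-a) • (2 • innerSL ℝ (x - x₀)))) x :=
    (Real.hasDerivAt_exp _).comp_hasFDerivAt x h2
  exact Complex.ofRealCLM.hasFDerivAt.comp x h3

lemma gauss_fderiv_norm {a : ℝ} (ha : 0 < a) (x₀ x : E3) :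
    ‖Complex.ofRealCLM.comp
        ((rexp (-a * ‖x - x₀‖ ^ 2)) • ((-a) • (2 • innerSL ℝ (x - x₀))))‖
      = rexp (-a * ‖x - x₀‖ ^ 2) * (a * (2 * ‖x - x₀‖)) := by
  have h2 : (rexp (-a * ‖x - x₀‖ ^ 2)) • ((-a) • ((2:ℕ) • innerSL ℝ (x - x₀)))
      = (rexp (-a * ‖x - x₀‖ ^ 2) * (-a) * 2) • innerSL ℝ (x - x₀) := by
    rw [← Nat.cast_smul_eq_nsmul ℝ 2, smul_smul, smul_smul]
    norm_num
  rw [show Complex.ofRealCLM = Complex.ofRealLI.toContinuousLinearMap from rfl,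
    Complex.ofRealLI.norm_toContinuousLinearMap_comp, h2,
    norm_smul (α := ℝ) (β := EuclideanSpace ℝ (Fin 3) →L[ℝ] ℝ) _ _, innerSL_apply_norm]
  rw [Real.norm_eq_abs, abs_mul, abs_mul, abs_of_nonneg (Real.exp_pos _).le, abs_neg,
    abs_of_pos ha, abs_two]
  ring

lemma gauss_sq_bound {a t : ℝ} (ha : 0 < a) (ht : 0 ≤ t) :
    (rexp (-a * t ^ 2) * (a * (2 * t))) ^ 2 ≤ 4 * a * rexp (-a * t ^ 2) := by
  set s : ℝ := a * t ^ 2 with hs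
  have hs0 : 0 ≤ s := by positivity
  have h1 : s ≤ rexp s := by linarith [Real.add_one_le_exp s]
  have h2 : rexp (-s) * rexp s = 1 := by rw [← Real.exp_add]; simp
  have h3 : s * rexp (-s) ≤ 1 := by
    have := mul_le_mul_of_nonneg_left h1 (Real.exp_pos (-s)).le
    nlinarith [Real.exp_pos (-s)]
  have hexp : rexp (-a * t ^ 2) = rexp (-s) := by rw [hs, neg_mul]
  rw [hexp]
  have hep := (Real.exp_pos (-s)).le
  have h4 := mul_le_mul_of_nonneg_right h3 hep
  have key : 4 * a * (s * rexp (-s) * rexp (-s)) ≤ 4 * a * rexp (-s) := by nlinarith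
  calc (rexp (-s) * (a * (2 * t))) ^ 2 = 4 * a * (s * rexp (-s) * rexp (-s)) := by
        rw [hs]; ring
    _ ≤ 4 * a * rexp (-s) := key

lemma gauss_sum_bound {a R : ℝ} (hR : 1 ≤ R) (ha_def : a = (R ^ 2)⁻¹) :
    (π / (2 * a)) ^ ((3:ℝ)/2) + 4 * a * (π / a) ^ ((3:ℝ)/2) ≤ 5 * π ^ 2 * R ^ 3 := by
  have hR0 : (0:ℝ) < R := lt_of_lt_of_le one_pos hR
  have ha : 0 < a := by rw [ha_def]; positivity
  have ha1 : a ≤ 1 := by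
    rw [ha_def]
    have h1 : (1:ℝ) ≤ R ^ 2 := by nlinarith
    have := inv_anti₀ one_pos h1
    simpa using this
  have h2a : π / (2 * a) = π * R ^ 2 / 2 := by rw [ha_def]; field_simp
  have hpa : π / a = π * R ^ 2 := by rw [ha_def]; field_simp
  have key : (π * R ^ 2) ^ ((3:ℝ)/2) = π ^ ((3:ℝ)/2) * R ^ 3 := by
    rw [Real.mul_rpow Real.pi_pos.le (by positivity)]
    congr 1
    rw [← Real.rpow_natCast R 2, ← Real.rpow_mul hR0.le]
    norm_num
  have hpi1 : (1:ℝ) ≤ π := by linarith [Real.pi_gt_three]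
  have hpow : π ^ ((3:ℝ)/2) ≤ π ^ 2 := by
    have := Real.rpow_le_rpow_of_exponent_le hpi1 (show (3:ℝ)/2 ≤ 2 by norm_num)
    rwa [Real.rpow_two] at this
  have hpow0 : 0 ≤ π ^ ((3:ℝ)/2) := Real.rpow_nonneg Real.pi_pos.le _
  have hR3 : (0:ℝ) ≤ R ^ 3 := by positivity
  have hB1 : (π / (2 * a)) ^ ((3:ℝ)/2) ≤ π ^ 2 * R ^ 3 := by
    rw [h2a]
    calc (π * R ^ 2 / 2) ^ ((3:ℝ)/2) ≤ (π * R ^ 2) ^ ((3:ℝ)/2) := by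
          apply Real.rpow_le_rpow (by positivity) (by nlinarith [Real.pi_pos]) (by norm_num)
      _ = π ^ ((3:ℝ)/2) * R ^ 3 := key
      _ ≤ π ^ 2 * R ^ 3 := by nlinarith
  have hB2 : 4 * a * (π / a) ^ ((3:ℝ)/2) ≤ 4 * (π ^ 2 * R ^ 3) := by
    rw [hpa, key]
    have h1 : π ^ ((3:ℝ)/2) * R ^ 3 ≤ π ^ 2 * R ^ 3 := by nlinarith
    have h2 : 0 ≤ π ^ ((3:ℝ)/2) * R ^ 3 := by positivity
    nlinarith
  nlinarith

/-- A function `f : ℝ³ → ℂ` is an `H¹` function: it is differentiable, square-integrable,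
and its (Fréchet) derivative is square-integrable (in operator norm). -/
def IsH1 (f : EuclideanSpace ℝ (Fin 3) → ℂ) : Prop :=
  Differentiable ℝ f ∧
    (∫⁻ x, (‖f x‖₊ : ℝ≥0∞) ^ 2) < ⊤ ∧
    (∫⁻ x, (‖fderiv ℝ f x‖₊ : ℝ≥0∞) ^ 2) < ⊤

/-- There is a constant `C₃ > 0`, depending only on the dimension `3`,
such that whenever `V : ℝ³ → ℝ` is measurable and `C ≥ 0` satisfies the form bound
`V² ≤ C²(1 − Δ)` (tested against all `H¹` functions), then for every center `x₀` and every
radius `R ≥ 1` one has `∫_{B(x₀,R)} |V|² ≤ C₃ C² R³`; in particular `V ∈ L²_loc`. -/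
theorem stmt18 :
    ∃ C₃ : ℝ, 0 < C₃ ∧
      ∀ (V : EuclideanSpace ℝ (Fin 3) → ℝ), Measurable V →
      ∀ C : ℝ, 0 ≤ C →
      (∀ f : EuclideanSpace ℝ (Fin 3) → ℂ, IsH1 f →
        (∫⁻ x, (‖V x • f x‖₊ : ℝ≥0∞) ^ 2) ≤
          (ENNReal.ofReal C) ^ 2 *
            ((∫⁻ x, (‖f x‖₊ : ℝ≥0∞) ^ 2) + ∫⁻ x, (‖fderiv ℝ f x‖₊ : ℝ≥0∞) ^ 2)) →
      ∀ (x₀ : EuclideanSpace ℝ (Fin 3)) (R : ℝ), 1 ≤ R →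
        (∫⁻ x in Metric.closedBall x₀ R, (‖V x‖₊ : ℝ≥0∞) ^ 2) ≤
          ENNReal.ofReal (C₃ * C ^ 2 * R ^ 3) := by
  refine ⟨Real.exp 1 ^ 2 * (5 * π ^ 2), by positivity, ?_⟩
  intro V hV C hC hbound x₀ R hR
  have hR0 : (0:ℝ) < R := lt_of_lt_of_le one_pos hR
  set a : ℝ := (R ^ 2)⁻¹ with ha_def
  have ha : 0 < a := by rw [ha_def]; positivity
  have haR : a * R ^ 2 = 1 := inv_mul_cancel₀ (by positivity)
  set f : E3 → ℂ := fun y ↦ ((rexp (-a * ‖y - x₀‖ ^ 2) : ℝ) : ℂ) with hf_def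
  have hfd : ∀ x, HasFDerivAt f (Complex.ofRealCLM.comp
      ((rexp (-a * ‖x - x₀‖ ^ 2)) • ((-a) • (2 • innerSL ℝ (x - x₀))))) x :=
    fun x ↦ gauss_hasFDerivAt a x₀ x
  have hdiff : Differentiable ℝ f := fun x ↦ (hfd x).differentiableAt
  have hfderiv_norm : ∀ x, ‖fderiv ℝ f x‖
      = rexp (-a * ‖x - x₀‖ ^ 2) * (a * (2 * ‖x - x₀‖)) := fun x ↦ by
    rw [(hfd x).fderiv]; exact gauss_fderiv_norm ha x₀ x
  -- value of the L² norm of f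
  have hI1 : (∫⁻ x, (‖f x‖₊ : ℝ≥0∞) ^ 2)
      = ENNReal.ofReal ((π / (2 * a)) ^ ((3:ℝ)/2)) := by
    have hpt : ∀ x : E3, ((‖f x‖₊ : ℝ≥0∞)) ^ 2
        = ENNReal.ofReal (rexp (-(2 * a) * ‖x - x₀‖ ^ 2)) := by
      intro x
      rw [← enorm_eq_nnnorm, ← ofReal_norm_eq_enorm, ← ENNReal.ofReal_pow (norm_nonneg _)]
      congr 1
      rw [hf_def]
      simp only [Complex.norm_real, Real.norm_eq_abs, sq_abs]
      rw [pow_two, ← Real.exp_add]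
      ring_nf
    simp_rw [hpt]
    rw [← ofReal_integral_eq_lintegral_ofReal (gauss_integrable (by positivity) x₀)
      (Filter.Eventually.of_forall fun x ↦ (Real.exp_pos _).le)]
    congr 1
    have hshift := integral_sub_right_eq_self (μ := (volume : Measure E3))
      (fun x : E3 ↦ rexp (-(2 * a) * ‖x‖ ^ 2)) x₀
    rw [hshift, GaussianFourier.integral_rexp_neg_mul_sq_norm (by positivity)]
    norm_num [finrank_euclideanSpace_fin]
  -- bound for the L² norm of the derivative
  have hmeasVf : Measurable fun x ↦ V x • f x := hV.smul hdiff.continuous.measurable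
  have hI2 : (∫⁻ x, (‖fderiv ℝ f x‖₊ : ℝ≥0∞) ^ 2)
      ≤ ENNReal.ofReal (4 * a * (π / a) ^ ((3:ℝ)/2)) := by
    have hpt : ∀ x : E3, ((‖fderiv ℝ f x‖₊ : ℝ≥0∞)) ^ 2
        ≤ ENNReal.ofReal (4 * a * rexp (-a * ‖x - x₀‖ ^ 2)) := by
      intro x
      rw [← enorm_eq_nnnorm, ← ofReal_norm_eq_enorm, ← ENNReal.ofReal_pow (norm_nonneg _)]
      apply ENNReal.ofReal_le_ofReal
      rw [hfderiv_norm x]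
      exact gauss_sq_bound ha (norm_nonneg _)
    calc (∫⁻ x, (‖fderiv ℝ f x‖₊ : ℝ≥0∞) ^ 2)
        ≤ ∫⁻ x, ENNReal.ofReal (4 * a * rexp (-a * ‖x - x₀‖ ^ 2)) := lintegral_mono hpt
      _ = ENNReal.ofReal (∫ x, 4 * a * rexp (-a * ‖x - x₀‖ ^ 2)) :=
          (ofReal_integral_eq_lintegral_ofReal ((gauss_integrable ha x₀).const_mul _)
            (Filter.Eventually.of_forall fun x ↦ by positivity)).symm
      _ = ENNReal.ofReal (4 * a * (π / a) ^ ((3:ℝ)/2)) := by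
          rw [integral_const_mul]
          congr 1
          have hshift := integral_sub_right_eq_self (μ := (volume : Measure E3))
            (fun x : E3 ↦ rexp (-a * ‖x‖ ^ 2)) x₀
          rw [hshift, GaussianFourier.integral_rexp_neg_mul_sq_norm ha]
          norm_num [finrank_euclideanSpace_fin]
  have hH1 : IsH1 f :=
    ⟨hdiff, by rw [hI1]; exact ENNReal.ofReal_lt_top,
      lt_of_le_of_lt hI2 ENNReal.ofReal_lt_top⟩
  have hmain := hbound f hH1
  -- pointwise estimate on the ball
  have hball : ∀ x ∈ Metric.closedBall x₀ R, ((‖V x‖₊ : ℝ≥0∞)) ^ 2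
      ≤ ENNReal.ofReal (Real.exp 1) ^ 2 * (‖V x • f x‖₊ : ℝ≥0∞) ^ 2 := by
    intro x hx
    have hxx : ‖x - x₀‖ ≤ R := by
      rw [← dist_eq_norm]; exact Metric.mem_closedBall.mp hx
    have hg1 : 1 ≤ Real.exp 1 * rexp (-a * ‖x - x₀‖ ^ 2) := by
      rw [← Real.exp_add]
      apply Real.one_le_exp
      have h1 : ‖x - x₀‖ ^ 2 ≤ R ^ 2 := by
        apply pow_le_pow_left₀ (norm_nonneg _) hxx
      nlinarith
    have hnorm : ‖V x • f x‖ = |V x| * rexp (-a * ‖x - x₀‖ ^ 2) := by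
      rw [norm_smul, Real.norm_eq_abs, hf_def]
      simp only [Complex.norm_real, Real.norm_eq_abs, abs_of_nonneg (Real.exp_pos _).le]
    have hreal : ‖V x‖ ≤ Real.exp 1 * ‖V x • f x‖ := by
      rw [hnorm, Real.norm_eq_abs]
      nlinarith [abs_nonneg (V x)]
    rw [← enorm_eq_nnnorm, ← enorm_eq_nnnorm, ← ofReal_norm_eq_enorm, ← ofReal_norm_eq_enorm,
      ← mul_pow, ← ENNReal.ofReal_mul (Real.exp_pos _).le]
    exact pow_le_pow_left' (ENNReal.ofReal_le_ofReal hreal) 2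
  have hmeas2 : Measurable fun x ↦
      ENNReal.ofReal (Real.exp 1) ^ 2 * ((‖V x • f x‖₊ : ℝ≥0∞)) ^ 2 :=
    ((hmeasVf.nnnorm.coe_nnreal_ennreal.pow_const 2).const_mul _)
  calc (∫⁻ x in Metric.closedBall x₀ R, (‖V x‖₊ : ℝ≥0∞) ^ 2)
      ≤ ∫⁻ x in Metric.closedBall x₀ R,
          ENNReal.ofReal (Real.exp 1) ^ 2 * (‖V x • f x‖₊ : ℝ≥0∞) ^ 2 :=
        setLIntegral_mono hmeas2 hball
    _ ≤ ∫⁻ x, ENNReal.ofReal (Real.exp 1) ^ 2 * (‖V x • f x‖₊ : ℝ≥0∞) ^ 2 :=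
        setLIntegral_le_lintegral _ _
    _ = ENNReal.ofReal (Real.exp 1) ^ 2 * ∫⁻ x, (‖V x • f x‖₊ : ℝ≥0∞) ^ 2 :=
        lintegral_const_mul _ (hmeasVf.nnnorm.coe_nnreal_ennreal.pow_const 2)
    _ ≤ ENNReal.ofReal (Real.exp 1) ^ 2 * ((ENNReal.ofReal C) ^ 2 *
          (ENNReal.ofReal ((π / (2 * a)) ^ ((3:ℝ)/2))
            + ENNReal.ofReal (4 * a * (π / a) ^ ((3:ℝ)/2)))) := by
        apply mul_le_mul_right
        refine hmain.trans ?_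
        apply mul_le_mul_right
        rw [hI1] at hmain ⊢
        exact add_le_add le_rfl hI2
    _ ≤ ENNReal.ofReal (Real.exp 1 ^ 2 * (5 * π ^ 2) * C ^ 2 * R ^ 3) := by
        rw [← ENNReal.ofReal_add (by positivity) (by positivity),
          ← ENNReal.ofReal_pow (Real.exp_pos _).le, ← ENNReal.ofReal_pow hC,
          ← ENNReal.ofReal_mul (by positivity), ← ENNReal.ofReal_mul (by positivity)]
        apply ENNReal.ofReal_le_ofReal
        have hsum := gauss_sum_bound hR ha_def
        have he2 : (0:ℝ) < Real.exp 1 ^ 2 := by positivity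
        have hC2 : (0:ℝ) ≤ C ^ 2 := by positivity
        nlinarith [mul_le_mul_of_nonneg_left hsum hC2,
          mul_le_mul_of_nonneg_left
            (mul_le_mul_of_nonneg_left hsum hC2) he2.le]
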